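/- Let (A, ≻, ≺, Δ_{≻,r}, Δ_{≺,r}) be a factorizable anti-dendriform bialgebra. Then Im(T_r ⊕ T_{τ(r)}) = {(T_r(ζ), -T_{τ(r)}(ζ)) : ζ ∈ A*} is an anti-dendriform subalgebra of the direct sum anti-dendriform algebra A ⊕ A, isomorphic as an anti-dendriform algebra to (A*, ≻_r, ≺_r). -/

import Mathlib

open TensorProduct

set_option synthInstance.maxHeartbeats 1000000
set_option maxHeartbeats 1600000

variable {K : Type*} [Field K]

/-- The anti-dendriform algebra identities for two bilinear operations `s` (≻) and `p` (≺):
`x≻(y≻z) = -(x·y)≻z = -x≺(y·z) = (x≺y)≺z` and `(x≻y)≺z = x≻(y≺z)`, where `x·y = x≻y + x≺y`. -/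
def IsAntiDend {M : Type*} [AddCommGroup M] [Module K M]
    (s p : M →ₗ[K] M →ₗ[K] M) : Prop :=
  ∀ x y z : M,
    s x (s y z) = - s (s x y + p x y) z ∧
    s x (s y z) = - p x (s y z + p y z) ∧
    s x (s y z) = p (p x y) z ∧
    p (s x y) z = s x (p y z)

/-- The bilinear map `a ⊗ b ↦ (ζ ↦ ζ(a) • b)` used to define `T_r`. -/
noncomputable def Tbil {M : Type*} [AddCommGroup M] [Module K M] :
    M →ₗ[K] M →ₗ[K] (Module.Dual K M →ₗ[K] M) :=
  LinearMap.mk₂ K (fun a b => (Module.Dual.eval K M a).smulRight b)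
    (fun a a' b => by ext ζ; simp [add_smul])
    (fun c a b => by
      ext ζ
      simp only [LinearMap.smulRight_apply, LinearMap.smul_apply, map_smul,
        Module.Dual.eval_apply, smul_eq_mul, mul_smul])
    (fun a b b' => by ext ζ; simp)
    (fun c a b => by
      ext ζ
      simp only [LinearMap.smulRight_apply, LinearMap.smul_apply]
      exact smul_comm _ _ _)

/-- `T_r : A* → A`, `⟨T_r ζ, η⟩ = ⟨r, ζ ⊗ η⟩`; concretely `T_r ζ = Σ ζ(aᵢ) • bᵢ`
for `r = Σ aᵢ ⊗ bᵢ`. -/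
noncomputable def TmL {M : Type*} [AddCommGroup M] [Module K M] (r : M ⊗[K] M) :
    Module.Dual K M →ₗ[K] M :=
  TensorProduct.lift Tbil r

/-- The flip `τ : A ⊗ A → A ⊗ A`. -/
noncomputable def tau {M : Type*} [AddCommGroup M] [Module K M] (r : M ⊗[K] M) : M ⊗[K] M :=
  TensorProduct.comm K M M r

/-- `r` is invariant: `(R_≺(x)⊗I + I⊗L_·(x)) r = 0` and `(R_·(x)⊗I + I⊗L_≻(x)) r = 0`. -/
def Invariant {M : Type*} [AddCommGroup M] [Module K M]
    (s p : M →ₗ[K] M →ₗ[K] M) (r : M ⊗[K] M) : Prop :=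
  ∀ x : M,
    TensorProduct.map (p.flip x) (LinearMap.id : M →ₗ[K] M) r
      + TensorProduct.map (LinearMap.id : M →ₗ[K] M) ((s + p) x) r = 0 ∧
    TensorProduct.map ((s + p).flip x) (LinearMap.id : M →ₗ[K] M) r
      + TensorProduct.map (LinearMap.id : M →ₗ[K] M) (s x) r = 0

/-- `(a⊗b)⊗(c⊗d) ↦ (m a c) ⊗ b ⊗ d` : the product is placed in the first tensor slot,
giving `r₁₂ ∗ r₁₃` when applied to `r ⊗ r`. -/
noncomputable def place1 {M : Type*} [AddCommGroup M] [Module K M]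
    (m : M →ₗ[K] M →ₗ[K] M) :
    (M ⊗[K] M) ⊗[K] (M ⊗[K] M) →ₗ[K] M ⊗[K] (M ⊗[K] M) :=
  (TensorProduct.map (TensorProduct.lift m)
      (LinearMap.id : M ⊗[K] M →ₗ[K] M ⊗[K] M)) ∘ₗ
    (TensorProduct.tensorTensorTensorComm K M M M M).toLinearMap

/-- `(a⊗b)⊗(c⊗d) ↦ c ⊗ (m a d) ⊗ b` : the product in the second slot, giving `r₂₃ ∗ r₁₂`. -/
noncomputable def place2 {M : Type*} [AddCommGroup M] [Module K M]
    (m : M →ₗ[K] M →ₗ[K] M) :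
    (M ⊗[K] M) ⊗[K] (M ⊗[K] M) →ₗ[K] M ⊗[K] (M ⊗[K] M) :=
  (TensorProduct.leftComm K M M M).toLinearMap ∘ₗ
  (TensorProduct.map (LinearMap.id : M →ₗ[K] M) (TensorProduct.comm K M M).toLinearMap) ∘ₗ
  (TensorProduct.map (TensorProduct.lift m)
      (LinearMap.id : M ⊗[K] M →ₗ[K] M ⊗[K] M)) ∘ₗ
  (TensorProduct.tensorTensorTensorComm K M M M M).toLinearMap ∘ₗ
  (TensorProduct.congr (LinearEquiv.refl K (M ⊗[K] M)) (TensorProduct.comm K M M)).toLinearMap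

/-- `(a⊗b)⊗(c⊗d) ↦ a ⊗ c ⊗ (m b d)` : the product in the third slot, giving `r₁₃ ∗ r₂₃`. -/
noncomputable def place3 {M : Type*} [AddCommGroup M] [Module K M]
    (m : M →ₗ[K] M →ₗ[K] M) :
    (M ⊗[K] M) ⊗[K] (M ⊗[K] M) →ₗ[K] M ⊗[K] (M ⊗[K] M) :=
  (TensorProduct.assoc K M M M).toLinearMap ∘ₗ
  (TensorProduct.map (LinearMap.id : M ⊗[K] M →ₗ[K] M ⊗[K] M) (TensorProduct.lift m)) ∘ₗ
  (TensorProduct.tensorTensorTensorComm K M M M M).toLinearMap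

/-- `D(r) = r₁₂·r₁₃ + r₂₃≻r₁₂ - r₁₃≺r₂₃`. -/
noncomputable def adD {M : Type*} [AddCommGroup M] [Module K M]
    (s p : M →ₗ[K] M →ₗ[K] M) (r : M ⊗[K] M) : M ⊗[K] (M ⊗[K] M) :=
  place1 (s + p) (r ⊗ₜ[K] r) + place2 s (r ⊗ₜ[K] r) - place3 p (r ⊗ₜ[K] r)

/-- `D₁(r) = r₂₃·r₁₂ + r₁₃≻r₂₃ + r₁₂≺r₁₃`. -/
noncomputable def adD1 {M : Type*} [AddCommGroup M] [Module K M]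
    (s p : M →ₗ[K] M →ₗ[K] M) (r : M ⊗[K] M) : M ⊗[K] (M ⊗[K] M) :=
  place2 (s + p) (r ⊗ₜ[K] r) + place3 s (r ⊗ₜ[K] r) + place1 p (r ⊗ₜ[K] r)

/-- `D₂(r) = r₁₃·r₂₃ - r₁₂≻r₁₃ + r₂₃≺r₁₂`. -/
noncomputable def adD2 {M : Type*} [AddCommGroup M] [Module K M]
    (s p : M →ₗ[K] M →ₗ[K] M) (r : M ⊗[K] M) : M ⊗[K] (M ⊗[K] M) :=
  place3 (s + p) (r ⊗ₜ[K] r) - place1 s (r ⊗ₜ[K] r) + place2 p (r ⊗ₜ[K] r)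

/-- The anti-dendriform Yang-Baxter equation `D(r) = 0`. -/
noncomputable def AYBE {M : Type*} [AddCommGroup M] [Module K M]
    (s p : M →ₗ[K] M →ₗ[K] M) (r : M ⊗[K] M) : Prop :=
  adD s p r = 0

/-- `x ↦ R_m(x)* = (y ↦ m y x)*` on the dual space. -/
noncomputable def RstarOp {M : Type*} [AddCommGroup M] [Module K M]
    (m : M →ₗ[K] M →ₗ[K] M) :
    M →ₗ[K] (Module.Dual K M →ₗ[K] Module.Dual K M) :=
  Module.Dual.transpose ∘ₗ m.flip

/-- `x ↦ L_m(x)* = (y ↦ m x y)*` on the dual space. -/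
noncomputable def LstarOp {M : Type*} [AddCommGroup M] [Module K M]
    (m : M →ₗ[K] M →ₗ[K] M) :
    M →ₗ[K] (Module.Dual K M →ₗ[K] Module.Dual K M) :=
  Module.Dual.transpose ∘ₗ m

/-- `ζ ≻_r η = -R_·*(T_r ζ) η - L_≺*(T_{τ(r)} η) ζ`. -/
noncomputable def succR {M : Type*} [AddCommGroup M] [Module K M]
    (s p : M →ₗ[K] M →ₗ[K] M) (r : M ⊗[K] M) :
    Module.Dual K M →ₗ[K] Module.Dual K M →ₗ[K] Module.Dual K M :=
  (RstarOp (s + p) ∘ₗ (- TmL r)) + (LstarOp p ∘ₗ (- TmL (tau r))).flip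

/-- `ζ ≺_r η = R_≻*(T_r ζ) η + L_·*(T_{τ(r)} η) ζ`. -/
noncomputable def precR {M : Type*} [AddCommGroup M] [Module K M]
    (s p : M →ₗ[K] M →ₗ[K] M) (r : M ⊗[K] M) :
    Module.Dual K M →ₗ[K] Module.Dual K M →ₗ[K] Module.Dual K M :=
  (RstarOp s ∘ₗ TmL r) + (LstarOp (s + p) ∘ₗ TmL (tau r)).flip

variable {A : Type*} [AddCommGroup A] [Module K A]

/-! ### Auxiliary lemmas -/

@[simp] lemma TmL_tmul (a b : A) (ζ : Module.Dual K A) :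
    TmL (a ⊗ₜ[K] b) ζ = ζ a • b := by
  simp [TmL, Tbil]

@[simp] lemma tau_tmul (a b : A) : tau (a ⊗ₜ[K] b) = b ⊗ₜ[K] a := by
  simp [tau]

@[simp] lemma tau_zero : tau (0 : A ⊗[K] A) = 0 := by simp [tau]

@[simp] lemma tau_add (x y : A ⊗[K] A) : tau (x + y) = tau x + tau y := by
  simp [tau]

@[simp] lemma TmL_zero : TmL (0 : A ⊗[K] A) = (0 : Module.Dual K A →ₗ[K] A) :=
  map_zero (TensorProduct.lift Tbil)

@[simp] lemma TmL_add (x y : A ⊗[K] A) : TmL (x + y) = TmL x + TmL y :=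
  map_add (TensorProduct.lift Tbil) x y

@[simp] lemma tau_tau (w : A ⊗[K] A) : tau (tau w) = w := by
  induction w using TensorProduct.induction_on with
  | zero => simp
  | tmul a b => simp
  | add x y hx hy => simp [hx, hy]

lemma star_lemma (w : A ⊗[K] A) (ζ η : Module.Dual K A) :
    η (TmL w ζ) = ζ (TmL (tau w) η) := by
  induction w using TensorProduct.induction_on with
  | zero => simp
  | tmul a b => simp [mul_comm]
  | add x y hx hy => simp [hx, hy]

/-- Contraction of `A ⊗ A` with two functionals. -/
noncomputable def st13c2 (ζ η : Module.Dual K A) : A ⊗[K] A →ₗ[K] K :=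
  TensorProduct.lift (ζ.smulRight η)

@[simp] lemma st13c2_tmul (ζ η : Module.Dual K A) (a b : A) :
    st13c2 ζ η (a ⊗ₜ[K] b) = ζ a * η b := by simp [st13c2]

/-- Contraction of `A ⊗ (A ⊗ A)` with three functionals. -/
noncomputable def st13c3 (ζ η θ : Module.Dual K A) : A ⊗[K] (A ⊗[K] A) →ₗ[K] K :=
  TensorProduct.lift (ζ.smulRight (st13c2 η θ))

@[simp] lemma st13c3_tmul (ζ η θ : Module.Dual K A) (a : A) (w : A ⊗[K] A) :
    st13c3 ζ η θ (a ⊗ₜ[K] w) = ζ a * st13c2 η θ w := by simp [st13c3]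

lemma st13c2_eq (ζ η : Module.Dual K A) (w : A ⊗[K] A) :
    st13c2 ζ η w = η (TmL w ζ) := by
  induction w using TensorProduct.induction_on with
  | zero => simp
  | tmul a b => simp
  | add x y hx hy => simp [hx, hy]

lemma st13c2_map (f g : A →ₗ[K] A) (ζ η : Module.Dual K A) (w : A ⊗[K] A) :
    st13c2 ζ η (TensorProduct.map f g w) = st13c2 (ζ ∘ₗ f) (η ∘ₗ g) w := by
  induction w using TensorProduct.induction_on with
  | zero => simp
  | tmul a b => simp
  | add x y hx hy => simp [hx, hy]

lemma cL1 (m' : A →ₗ[K] A →ₗ[K] A) (ζ η θ : Module.Dual K A) (w₁ w₂ : A ⊗[K] A) :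
    st13c3 ζ η θ (place1 m' (w₁ ⊗ₜ[K] w₂)) =
      ζ (m' (TmL (tau w₁) η) (TmL (tau w₂) θ)) := by
  induction w₁ using TensorProduct.induction_on with
  | zero => simp [TensorProduct.zero_tmul]
  | add x y hx hy => simp [TensorProduct.add_tmul, hx, hy]
  | tmul a b =>
    induction w₂ using TensorProduct.induction_on with
    | zero => simp [TensorProduct.tmul_zero]
    | add x y hx hy => simp [TensorProduct.tmul_add, hx, hy]
    | tmul c d =>
      simp [place1, TensorProduct.tensorTensorTensorComm_tmul, smul_smul]
      ring

lemma cL2 (m' : A →ₗ[K] A →ₗ[K] A) (ζ η θ : Module.Dual K A) (w₁ w₂ : A ⊗[K] A) :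
    st13c3 ζ η θ (place2 m' (w₁ ⊗ₜ[K] w₂)) =
      η (m' (TmL (tau w₁) θ) (TmL w₂ ζ)) := by
  induction w₁ using TensorProduct.induction_on with
  | zero => simp [TensorProduct.zero_tmul]
  | add x y hx hy => simp [TensorProduct.add_tmul, hx, hy]
  | tmul a b =>
    induction w₂ using TensorProduct.induction_on with
    | zero => simp [TensorProduct.tmul_zero]
    | add x y hx hy => simp [TensorProduct.tmul_add, hx, hy]
    | tmul c d =>
      simp [place2, TensorProduct.tensorTensorTensorComm_tmul,
        TensorProduct.leftComm_tmul, smul_smul]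
      ring

lemma cL3 (m' : A →ₗ[K] A →ₗ[K] A) (ζ η θ : Module.Dual K A) (w₁ w₂ : A ⊗[K] A) :
    st13c3 ζ η θ (place3 m' (w₁ ⊗ₜ[K] w₂)) =
      θ (m' (TmL w₁ ζ) (TmL w₂ η)) := by
  induction w₁ using TensorProduct.induction_on with
  | zero => simp [TensorProduct.zero_tmul]
  | add x y hx hy => simp [TensorProduct.add_tmul, hx, hy]
  | tmul a b =>
    induction w₂ using TensorProduct.induction_on with
    | zero => simp [TensorProduct.tmul_zero]
    | add x y hx hy => simp [TensorProduct.tmul_add, hx, hy]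
    | tmul c d =>
      simp [place3, TensorProduct.tensorTensorTensorComm_tmul, smul_smul]
      ring

/-- Scalar form of the AD-YBE: contraction of `D(r) = 0` against `ζ ⊗ η ⊗ θ`. -/
lemma E0s (s p : A →ₗ[K] A →ₗ[K] A) (r : A ⊗[K] A) (hy : AYBE s p r)
    (ζ η θ : Module.Dual K A) :
    θ (p (TmL r ζ) (TmL r η)) =
      η (s (TmL (tau r) θ) (TmL r ζ)) +
      (ζ (s (TmL (tau r) η) (TmL (tau r) θ)) +
        ζ (p (TmL (tau r) η) (TmL (tau r) θ))) := by
  have h0 : st13c3 ζ η θ (adD s p r) = 0 := by rw [hy]; simp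
  rw [adD, map_sub, map_add, cL1, cL2, cL3] at h0
  simp only [LinearMap.add_apply, map_add] at h0
  linear_combination -h0

lemma tau_nu (r : A ⊗[K] A) : tau (r + tau r) = r + tau r := by
  rw [tau_add, tau_tau, add_comm]

/-- Scalar form of the first invariance condition. -/
lemma I1s (s p : A →ₗ[K] A →ₗ[K] A) (r : A ⊗[K] A)
    (hinv : Invariant s p (r + tau r)) (x : A) (ζ η : Module.Dual K A) :
    ζ (p (TmL r η) x) + ζ (p (TmL (tau r) η) x)
      + (η (s x (TmL r ζ)) + η (p x (TmL r ζ)))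
      + (η (s x (TmL (tau r) ζ)) + η (p x (TmL (tau r) ζ))) = 0 := by
  have h0 : st13c2 ζ η (TensorProduct.map (p.flip x) LinearMap.id (r + tau r)
      + TensorProduct.map LinearMap.id ((s + p) x) (r + tau r)) = 0 := by
    rw [(hinv x).1]; simp
  rw [map_add, st13c2_map, st13c2_map, st13c2_eq, st13c2_eq] at h0
  have e1 : (η ∘ₗ LinearMap.id) (TmL (r + tau r) (ζ ∘ₗ p.flip x))
      = ζ (p (TmL (r + tau r) η) x) := by
    simp only [LinearMap.comp_apply, LinearMap.id_apply]
    rw [star_lemma, tau_nu]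
    simp only [LinearMap.comp_apply, LinearMap.flip_apply]
  rw [e1] at h0
  simp only [TmL_add, LinearMap.add_apply, map_add, LinearMap.comp_id,
    LinearMap.comp_apply, LinearMap.id_apply] at h0
  linear_combination h0

/-- Scalar form of the second invariance condition. -/
lemma I2s (s p : A →ₗ[K] A →ₗ[K] A) (r : A ⊗[K] A)
    (hinv : Invariant s p (r + tau r)) (x : A) (ζ η : Module.Dual K A) :
    (ζ (s (TmL r η) x) + ζ (p (TmL r η) x))
      + (ζ (s (TmL (tau r) η) x) + ζ (p (TmL (tau r) η) x))
      + (η (s x (TmL r ζ)) + η (s x (TmL (tau r) ζ))) = 0 := by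
  have h0 : st13c2 ζ η (TensorProduct.map ((s + p).flip x) LinearMap.id (r + tau r)
      + TensorProduct.map LinearMap.id (s x) (r + tau r)) = 0 := by
    rw [(hinv x).2]; simp
  rw [map_add, st13c2_map, st13c2_map, st13c2_eq, st13c2_eq] at h0
  have e1 : (η ∘ₗ LinearMap.id) (TmL (r + tau r) (ζ ∘ₗ (s + p).flip x))
      = ζ ((s + p) (TmL (r + tau r) η) x) := by
    simp only [LinearMap.comp_apply, LinearMap.id_apply]
    rw [star_lemma, tau_nu]
    simp only [LinearMap.comp_apply, LinearMap.flip_apply]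
  rw [e1] at h0
  simp only [TmL_add, LinearMap.add_apply, map_add, LinearMap.comp_id,
    LinearMap.comp_apply, LinearMap.id_apply] at h0
  linear_combination h0

lemma succR_apply (s p : A →ₗ[K] A →ₗ[K] A) (r : A ⊗[K] A)
    (ζ η : Module.Dual K A) (x : A) :
    succR s p r ζ η x =
      -(η (s x (TmL r ζ)) + η (p x (TmL r ζ))) - ζ (p (TmL (tau r) η) x) := by
  simp only [succR, RstarOp, LstarOp, LinearMap.add_apply, LinearMap.flip_apply,
    LinearMap.comp_apply, LinearMap.neg_apply, map_neg, Module.Dual.transpose_apply,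
    LinearMap.sub_apply]
  simp only [LinearMap.comp_apply, LinearMap.flip_apply, LinearMap.neg_apply,
    LinearMap.add_apply, map_neg, map_add]
  ring

lemma precR_apply (s p : A →ₗ[K] A →ₗ[K] A) (r : A ⊗[K] A)
    (ζ η : Module.Dual K A) (x : A) :
    precR s p r ζ η x =
      η (s x (TmL r ζ)) + (ζ (s (TmL (tau r) η) x) + ζ (p (TmL (tau r) η) x)) := by
  simp only [precR, RstarOp, LstarOp, LinearMap.add_apply, LinearMap.flip_apply,
    LinearMap.comp_apply, Module.Dual.transpose_apply]
  simp only [LinearMap.comp_apply, LinearMap.flip_apply, LinearMap.add_apply, map_add]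

lemma dual_sep (x y : A) (h : ∀ θ : Module.Dual K A, θ x = θ y) : x = y := by
  have := (Module.forall_dual_apply_eq_zero_iff K (x - y)).mp
    (fun φ => by rw [map_sub, h φ, sub_self])
  exact sub_eq_zero.mp this

/-- for a factorizable anti-dendriform bialgebra,
`Im(T_r ⊕ T_{τ(r)})` is an anti-dendriform subalgebra of the direct sum `A ⊕ A`
(with componentwise operations), isomorphic to `(A*, ≻_r, ≺_r)`. -/
theorem stmt13 [FiniteDimensional K A]
    (s p : A →ₗ[K] A →ₗ[K] A) (h : IsAntiDend s p) (r : A ⊗[K] A)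
    (hy : AYBE s p r) (hinv : Invariant s p (r + tau r))
    (hbij : Function.Bijective (TmL (r + tau r))) :
    (∀ q₁ q₂ : A × A,
        q₁ ∈ LinearMap.range ((TmL r).prod (- TmL (tau r))) →
        q₂ ∈ LinearMap.range ((TmL r).prod (- TmL (tau r))) →
        (s q₁.1 q₂.1, s q₁.2 q₂.2) ∈ LinearMap.range ((TmL r).prod (- TmL (tau r))) ∧
        (p q₁.1 q₂.1, p q₁.2 q₂.2) ∈ LinearMap.range ((TmL r).prod (- TmL (tau r)))) ∧
    ∃ φ : Module.Dual K A ≃ₗ[K] ↥(LinearMap.range ((TmL r).prod (- TmL (tau r)))),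
      (∀ ζ η : Module.Dual K A,
        (φ (succR s p r ζ η)).val =
          (s (φ ζ).val.1 (φ η).val.1, s (φ ζ).val.2 (φ η).val.2)) ∧
      (∀ ζ η : Module.Dual K A,
        (φ (precR s p r ζ η)).val =
          (p (φ ζ).val.1 (φ η).val.1, p (φ ζ).val.2 (φ η).val.2)) := by
  clear h
  -- the four homomorphism identities
  have hH1 : ∀ ζ η : Module.Dual K A,
      TmL r (succR s p r ζ η) = s (TmL r ζ) (TmL r η) := by
    intro ζ η
    apply dual_sep (K := K)
    intro θ
    rw [star_lemma, succR_apply]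
    linear_combination (E0s s p r hy ζ η θ) + (E0s s p r hy θ ζ η)
      - (I1s s p r hinv (TmL r ζ) η θ) + (I2s s p r hinv (TmL (tau r) η) θ ζ)
  have hH2 : ∀ ζ η : Module.Dual K A,
      TmL (tau r) (succR s p r ζ η) = - s (TmL (tau r) ζ) (TmL (tau r) η) := by
    intro ζ η
    apply dual_sep (K := K)
    intro θ
    rw [star_lemma, tau_tau, succR_apply, map_neg]
    linear_combination -(E0s s p r hy ζ η θ) - (E0s s p r hy θ ζ η)
      + (I1s s p r hinv (TmL r ζ) η θ) - (I2s s p r hinv (TmL r ζ) η θ)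
      - (I1s s p r hinv (TmL (tau r) η) θ ζ)
  have hH3 : ∀ ζ η : Module.Dual K A,
      TmL r (precR s p r ζ η) = p (TmL r ζ) (TmL r η) := by
    intro ζ η
    apply dual_sep (K := K)
    intro θ
    rw [star_lemma, precR_apply]
    linear_combination -(E0s s p r hy ζ η θ)
  have hH4 : ∀ ζ η : Module.Dual K A,
      TmL (tau r) (precR s p r ζ η) = - p (TmL (tau r) ζ) (TmL (tau r) η) := by
    intro ζ η
    apply dual_sep (K := K)
    intro θ
    rw [star_lemma, tau_tau, precR_apply, map_neg]
    linear_combination (E0s s p r hy ζ η θ)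
      - (I1s s p r hinv (TmL r ζ) η θ) + (I2s s p r hinv (TmL r ζ) η θ)
      + (I1s s p r hinv (TmL (tau r) η) θ ζ)
  -- key equalities for images
  set F := (TmL r).prod (- TmL (tau r)) with hF
  have hFapp : ∀ ζ : Module.Dual K A, F ζ = (TmL r ζ, - TmL (tau r) ζ) := by
    intro ζ; rfl
  have hFs : ∀ ζ η : Module.Dual K A,
      F (succR s p r ζ η) = (s (F ζ).1 (F η).1, s (F ζ).2 (F η).2) := by
    intro ζ η
    simp only [hF, LinearMap.prod_apply, Function.prod, LinearMap.neg_apply, Prod.mk.injEq]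
    constructor
    · exact hH1 ζ η
    · rw [hH2 ζ η]; simp
  have hFp : ∀ ζ η : Module.Dual K A,
      F (precR s p r ζ η) = (p (F ζ).1 (F η).1, p (F ζ).2 (F η).2) := by
    intro ζ η
    simp only [hF, LinearMap.prod_apply, Function.prod, LinearMap.neg_apply, Prod.mk.injEq]
    constructor
    · exact hH3 ζ η
    · rw [hH4 ζ η]; simp
  -- injectivity of F
  have hinj : Function.Injective F := by
    intro ζ η hζη
    rw [hFapp, hFapp, Prod.mk.injEq] at hζη
    apply hbij.injective
    rw [TmL_add, LinearMap.add_apply, LinearMap.add_apply, hζη.1,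
      neg_inj.mp hζη.2]
  constructor
  · rintro q₁ q₂ ⟨ζ, rfl⟩ ⟨η, rfl⟩
    exact ⟨⟨succR s p r ζ η, hFs ζ η⟩, ⟨precR s p r ζ η, hFp ζ η⟩⟩
  · refine ⟨LinearEquiv.ofInjective F hinj, fun ζ η => ?_, fun ζ η => ?_⟩
    · simp only [LinearEquiv.ofInjective_apply]
      exact hFs ζ η
    · simp only [LinearEquiv.ofInjective_apply]
      exact hFp ζ η
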